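/- Let π be an independent joint policy of a finite Markov game. The following two conditions are equivalent: (ii) for every agent i, every policy π'_i : S → Δ(A_i) of agent i, and every s ∈ S, V^{(π'_i, π_{-i})}(s) ≤ V^π(s); and (iii) for every agent i, every π'_i : S → Δ(A_i), and every s ∈ S, Σ_{a∈A} π'_i(a_i|s) ∏_{j≠i} π_j(a_j|s) · Q^{V^π}(s, a) ≤ V^π(s). (Since π_i itself attains equality in both conditions, (ii) and (iii) are the Nash-equilibrium and agent-by-agent-optimality conditions of the paper stated in upper-bound form.) -/

import Mathlib

open Finset

section Aux
variable {n : ℕ} {St : Type*} [Fintype St] {A : Fin n → Type*} [∀ i, Fintype (A i)]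
variable (P : St → (∀ i, A i) → St → ℝ) (r : St → (∀ i, A i) → ℝ) (γ : ℝ)

/-- Bellman operator for a general joint distribution `w`. -/
def TwOp (w : St → (∀ i, A i) → ℝ) (V : St → ℝ) (s : St) : ℝ :=
  ∑ a : ∀ i, A i, w s a * (r s a + γ * ∑ s', P s a s' * V s')

lemma step_bound (hP0 : ∀ s a s', 0 ≤ P s a s') (hP1 : ∀ s a, ∑ s', P s a s' = 1)
    (hγ0 : 0 ≤ γ)
    (w : St → (∀ i, A i) → ℝ) (hw0 : ∀ s a, 0 ≤ w s a) (hw1 : ∀ s, ∑ a, w s a = 1)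
    (f g : St → ℝ) (M : ℝ) (h : ∀ t, f t - g t ≤ M) (s : St) :
    TwOp P r γ w f s ≤ TwOp P r γ w g s + γ * M := by
  have step : ∀ a : ∀ i, A i,
      w s a * (r s a + γ * ∑ s', P s a s' * f s')
        ≤ w s a * (r s a + γ * ∑ s', P s a s' * g s') + γ * M * w s a := by
    intro a
    have h1 : ∑ s', P s a s' * f s' ≤ (∑ s', P s a s' * g s') + M := by
      have : ∑ s', P s a s' * f s' ≤ ∑ s', (P s a s' * g s' + P s a s' * M) := by
        apply Finset.sum_le_sum
        intro t _
        nlinarith [h t, hP0 s a t]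
      calc ∑ s', P s a s' * f s' ≤ ∑ s', (P s a s' * g s' + P s a s' * M) := this
        _ = (∑ s', P s a s' * g s') + (∑ s', P s a s' ) * M := by
            rw [Finset.sum_add_distrib, Finset.sum_mul]
        _ = (∑ s', P s a s' * g s') + M := by rw [hP1]; ring
    nlinarith [hw0 s a, mul_le_mul_of_nonneg_left h1 (mul_nonneg (hw0 s a) hγ0)]
  calc TwOp P r γ w f s
      ≤ ∑ a : ∀ i, A i, (w s a * (r s a + γ * ∑ s', P s a s' * g s') + γ * M * w s a) :=
        Finset.sum_le_sum fun a _ => step a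
    _ = TwOp P r γ w g s + γ * M := by
        rw [Finset.sum_add_distrib, ← Finset.mul_sum, hw1]; unfold TwOp; ring

lemma key_le (hP0 : ∀ s a s', 0 ≤ P s a s') (hP1 : ∀ s a, ∑ s', P s a s' = 1)
    (hγ0 : 0 ≤ γ) (hγ1 : γ < 1)
    (w : St → (∀ i, A i) → ℝ) (hw0 : ∀ s a, 0 ≤ w s a) (hw1 : ∀ s, ∑ a, w s a = 1)
    (f g : St → ℝ)
    (hf : ∀ s, f s ≤ TwOp P r γ w f s) (hg : ∀ s, TwOp P r γ w g s ≤ g s)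
    (s : St) : f s ≤ g s := by
  obtain ⟨s0, -, hs0⟩ := Finset.exists_max_image Finset.univ (fun t => f t - g t)
    ⟨s, Finset.mem_univ s⟩
  set M := f s0 - g s0 with hM
  have hle : ∀ t, f t - g t ≤ M := fun t => hs0 t (Finset.mem_univ t)
  have h1 : f s0 ≤ g s0 + γ * M := by
    calc f s0 ≤ TwOp P r γ w f s0 := hf s0
      _ ≤ TwOp P r γ w g s0 + γ * M :=
        step_bound P r γ hP0 hP1 hγ0 w hw0 hw1 f g M hle s0
      _ ≤ g s0 + γ * M := by linarith [hg s0]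
  have hM0 : M ≤ 0 := by nlinarith
  linarith [hle s]

lemma exists_fp (hP0 : ∀ s a s', 0 ≤ P s a s') (hP1 : ∀ s a, ∑ s', P s a s' = 1)
    (hγ0 : 0 ≤ γ) (hγ1 : γ < 1)
    (w : St → (∀ i, A i) → ℝ) (hw0 : ∀ s a, 0 ≤ w s a) (hw1 : ∀ s, ∑ a, w s a = 1) :
    ∃ V : St → ℝ, ∀ s, V s = TwOp P r γ w V s := by
  have hlip : LipschitzWith ⟨γ, hγ0⟩ (fun V => TwOp P r γ w V) := by
    apply LipschitzWith.of_dist_le_mul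
    intro f g
    show dist (TwOp P r γ w f) (TwOp P r γ w g) ≤ γ * dist f g
    refine (dist_pi_le_iff (mul_nonneg hγ0 dist_nonneg)).2 fun s => ?_
    have hle1 : ∀ t, f t - g t ≤ dist f g := by
      intro t
      have := dist_le_pi_dist f g t
      rw [Real.dist_eq] at this
      linarith [le_abs_self (f t - g t), this]
    have hle2 : ∀ t, g t - f t ≤ dist f g := by
      intro t
      have := dist_le_pi_dist f g t
      rw [Real.dist_eq, abs_sub_comm] at this
      linarith [le_abs_self (g t - f t), this]
    have b1 := step_bound P r γ hP0 hP1 hγ0 w hw0 hw1 f g (dist f g) hle1 s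
    have b2 := step_bound P r γ hP0 hP1 hγ0 w hw0 hw1 g f (dist f g) hle2 s
    rw [Real.dist_eq, abs_le]
    constructor <;> linarith
  have hcontr : ContractingWith ⟨γ, hγ0⟩ (fun V => TwOp P r γ w V) := by
    refine ⟨?_, hlip⟩
    refine NNReal.coe_lt_coe.mp ?_
    exact hγ1
  refine ⟨hcontr.fixedPoint _, fun s => ?_⟩
  have := hcontr.fixedPoint_isFixedPt
  exact congrFun this.symm s

lemma sum_w_one {i : Fin n} (ρ : A i → ℝ) (hρ : ∑ ai, ρ ai = 1)
    (πs : ∀ j, A j → ℝ) (hπs : ∀ j, ∑ aj, πs j aj = 1) :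
    ∑ a : ∀ j, A j, ρ (a i) * ∏ j ∈ Finset.univ.erase i, πs j (a j) = 1 := by
  classical
  have hg : ∀ a : ∀ j, A j,
      ρ (a i) * ∏ j ∈ Finset.univ.erase i, πs j (a j)
        = ∏ j, Function.update πs i ρ j (a j) := by
    intro a
    rw [← Finset.mul_prod_erase Finset.univ _ (Finset.mem_univ i)]
    congr 1
    · rw [Function.update_self]
    · apply Finset.prod_congr rfl
      intro j hj
      rw [Function.update_of_ne (Finset.ne_of_mem_erase hj)]
  rw [Finset.sum_congr rfl fun a _ => hg a]
  have := Finset.prod_univ_sum (fun j : Fin n => (Finset.univ : Finset (A j)))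
    (fun j aj => Function.update πs i ρ j aj)
  rw [Fintype.piFinset_univ] at this
  rw [← this]
  apply Finset.prod_eq_one
  intro j _
  rcases eq_or_ne j i with rfl | hne
  · simpa [Function.update_self] using hρ
  · simpa [Function.update_of_ne hne] using hπs j

end Aux

/-- equivalence of the Nash-equilibrium and agent-by-agent-optimality
conditions. In a finite Markov game, let `π` be an independent joint policy (each
`π i s` a distribution on `A i`), with value function `Vπ` (the unique fixed point of
`T_π`, expressed as the fixed-point equation `hVπ`). Deviating values
`V^{(π'_i, π_{-i})}` are encoded as fixed points of the corresponding Bellman operator.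
Then condition (ii) `V^{(π'_i, π_{-i})}(s) ≤ V^π(s)` for all `i, π'_i, s` is equivalent
to condition (iii) `E_{π'_i, π_{-i}}[Q^{V^π}(s,a)] ≤ V^π(s)` for all `i, π'_i, s`. -/
theorem stmt8 {n : ℕ} {St : Type*} [Fintype St] {A : Fin n → Type*}
    [∀ i, Fintype (A i)] [∀ i, Nonempty (A i)]
    (P : St → (∀ i, A i) → St → ℝ) (r : St → (∀ i, A i) → ℝ) (γ : ℝ)
    (hP0 : ∀ s a s', 0 ≤ P s a s') (hP1 : ∀ s a, ∑ s', P s a s' = 1)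
    (hγ0 : 0 ≤ γ) (hγ1 : γ < 1)
    (π : (i : Fin n) → St → A i → ℝ)
    (hπ : ∀ i s, (∀ ai, 0 ≤ π i s ai) ∧ ∑ ai, π i s ai = 1)
    (Vπ : St → ℝ)
    (hVπ : ∀ s, Vπ s = ∑ a : ∀ i, A i, (∏ i, π i s (a i)) *
        (r s a + γ * ∑ s', P s a s' * Vπ s')) :
    ((∀ (i : Fin n) (π' : St → A i → ℝ),
        (∀ s, (∀ ai, 0 ≤ π' s ai) ∧ ∑ ai, π' s ai = 1) →
        ∀ V' : St → ℝ,
          (∀ s, V' s = ∑ a : ∀ i, A i,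
              (π' s (a i) * ∏ j ∈ Finset.univ.erase i, π j s (a j)) *
              (r s a + γ * ∑ s', P s a s' * V' s')) →
          ∀ s, V' s ≤ Vπ s)
      ↔
      (∀ (i : Fin n) (π' : St → A i → ℝ),
        (∀ s, (∀ ai, 0 ≤ π' s ai) ∧ ∑ ai, π' s ai = 1) →
        ∀ s, (∑ a : ∀ i, A i,
            (π' s (a i) * ∏ j ∈ Finset.univ.erase i, π j s (a j)) *
            (r s a + γ * ∑ s', P s a s' * Vπ s')) ≤ Vπ s)) := by

  classical
  constructor
  · -- (ii) → (iii)
    intro hii i π' hπ' s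
    set w' : St → (∀ j, A j) → ℝ :=
      fun t a => π' t (a i) * ∏ j ∈ Finset.univ.erase i, π j t (a j) with hw'def
    show TwOp P r γ w' Vπ s ≤ Vπ s
    -- modified (one-shot-improving) policy for agent i
    set πt : St → A i → ℝ :=
      fun t => if Vπ t < TwOp P r γ w' Vπ t then π' t else π i t with hπtdef
    set wt : St → (∀ j, A j) → ℝ :=
      fun t a => πt t (a i) * ∏ j ∈ Finset.univ.erase i, π j t (a j) with hwtdef
    have hπt_ok : ∀ t, (∀ ai, 0 ≤ πt t ai) ∧ ∑ ai, πt t ai = 1 := by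
      intro t
      by_cases h : Vπ t < TwOp P r γ w' Vπ t
      · simp only [hπtdef, if_pos h]; exact hπ' t
      · simp only [hπtdef, if_neg h]; exact hπ i t
    have hwt0 : ∀ t a, 0 ≤ wt t a := by
      intro t a
      exact mul_nonneg ((hπt_ok t).1 (a i))
        (Finset.prod_nonneg fun j _ => (hπ j t).1 (a j))
    have hwt1 : ∀ t, ∑ a, wt t a = 1 := fun t =>
      sum_w_one (πt t) (hπt_ok t).2 (fun j => π j t) (fun j => (hπ j t).2)
    obtain ⟨V', hV'⟩ := exists_fp P r γ hP0 hP1 hγ0 hγ1 wt hwt0 hwt1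
    have hub : ∀ t, Vπ t ≤ TwOp P r γ wt Vπ t := by
      intro t
      by_cases h : Vπ t < TwOp P r γ w' Vπ t
      · have hwteq : TwOp P r γ wt Vπ t = TwOp P r γ w' Vπ t := by
          unfold TwOp
          apply Finset.sum_congr rfl
          intro a _
          have h' := h
          simp only [hw'def] at h'
          simp only [hwtdef, hw'def, hπtdef, if_pos h']
        linarith
      · have hwteq : TwOp P r γ wt Vπ t = Vπ t := by
          rw [hVπ t]
          unfold TwOp
          apply Finset.sum_congr rfl
          intro a _
          simp only [hwtdef, hπtdef, if_neg h]
          rw [Finset.mul_prod_erase Finset.univ (fun j => π j t (a j)) (Finset.mem_univ i)]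
        linarith
    have h1 : ∀ t, Vπ t ≤ V' t :=
      key_le P r γ hP0 hP1 hγ0 hγ1 wt hwt0 hwt1 Vπ V' hub
        (fun t => le_of_eq (hV' t).symm)
    have h2 : ∀ t, V' t ≤ Vπ t := hii i πt hπt_ok V' (fun t => hV' t)
    have hVeq : ∀ t, V' t = Vπ t := fun t => le_antisymm (h2 t) (h1 t)
    by_contra hlt
    push_neg at hlt
    have hVfun : V' = Vπ := funext hVeq
    have hfix : Vπ s = TwOp P r γ wt Vπ s := by
      have := hV' s
      rwa [hVfun] at this
    have hws : TwOp P r γ wt Vπ s = TwOp P r γ w' Vπ s := by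
      unfold TwOp
      apply Finset.sum_congr rfl
      intro a _
      have hlt' := hlt
      simp only [hw'def] at hlt'
      simp only [hwtdef, hw'def, hπtdef, if_pos hlt']
    have : Vπ s = TwOp P r γ w' Vπ s := by
      rw [hfix, hws]
    linarith
  · -- (iii) → (ii)
    intro hiii i π' hπ' V' hV' s
    have hw0 : ∀ t a, 0 ≤ (fun t (a : ∀ j, A j) =>
        π' t (a i) * ∏ j ∈ Finset.univ.erase i, π j t (a j)) t a := by
      intro t a
      exact mul_nonneg ((hπ' t).1 (a i))
        (Finset.prod_nonneg fun j _ => (hπ j t).1 (a j))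
    have hw1 : ∀ t, ∑ a, (fun t (a : ∀ j, A j) =>
        π' t (a i) * ∏ j ∈ Finset.univ.erase i, π j t (a j)) t a = 1 := fun t =>
      sum_w_one (π' t) (hπ' t).2 (fun j => π j t) (fun j => (hπ j t).2)
    exact key_le P r γ hP0 hP1 hγ0 hγ1 _ hw0 hw1 V' Vπ
      (fun t => le_of_eq (hV' t)) (fun t => hiii i π' hπ' t) s
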